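/- Let P be a proper étale groupoid (the map (r,s): P → P⁰ × P⁰ is proper) and let O ⊆ P be an open subset containing the isotropy group P^x_x at a point x ∈ P⁰. Then there is an open neighbourhood U ⊆ P⁰ of x such that the restriction P|_U = { p ∈ P : r(p) ∈ U and s(p) ∈ U } is contained in O. -/
import Mathlib


/-- An étale groupoid: a topological groupoid (encoded on its arrow space `A`, with units the
fixed points of the source map) whose range and source maps are local homeomorphisms. -/
structure EtaleGroupoid (A : Type*) [TopologicalSpace A] where
  r : A → A
  s : A → A
  mul : ∀ g h : A, s g = r h → A
  inv : A → A
  s_r : ∀ g, s (r g) = r g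
  r_r : ∀ g, r (r g) = r g
  r_s : ∀ g, r (s g) = s g
  s_s : ∀ g, s (s g) = s g
  r_mul : ∀ (g h) (e : s g = r h), r (mul g h e) = r g
  s_mul : ∀ (g h) (e : s g = r h), s (mul g h e) = s h
  mul_assoc : ∀ (g h k) (e₁ : s g = r h) (e₂' : s h = r k)
      (e₂ : s (mul g h e₁) = r k) (e₁' : s g = r (mul h k e₂')),
      mul (mul g h e₁) k e₂ = mul g (mul h k e₂') e₁'
  id_mul : ∀ g, mul (r g) g (s_r g) = g
  mul_id : ∀ (g) (e : s g = r (s g)), mul g (s g) e = g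
  r_inv : ∀ g, r (inv g) = s g
  s_inv : ∀ g, s (inv g) = r g
  mul_inv : ∀ (g) (e : s g = r (inv g)), mul g (inv g) e = r g
  inv_mul : ∀ (g) (e : s (inv g) = r g), mul (inv g) g e = s g
  continuous_r : Continuous r
  continuous_s : Continuous s
  continuous_inv : Continuous inv
  continuous_mul : Continuous fun p : {p : A × A // s p.1 = r p.2} => mul p.1.1 p.1.2 p.2
  etale_r : IsLocalHomeomorph r
  etale_s : IsLocalHomeomorph s

namespace EtaleGroupoid

variable {A : Type*} [TopologicalSpace A] (G : EtaleGroupoid A)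

/-- The unit space of the groupoid, as a subset of the arrow space. -/
def unitSet : Set A := {a | G.s a = a}

lemma r_mem_unitSet (g : A) : G.r g ∈ G.unitSet := G.s_r g

lemma s_mem_unitSet (g : A) : G.s g ∈ G.unitSet := G.s_s g

end EtaleGroupoid

/-!
STATEMENT 7: If `P` is a proper étale groupoid and `O ⊆ P` is an open set containing the
isotropy group `P^x_x` at a point `x ∈ P⁰`, then `O` contains the restriction `P|_U` for some
open neighbourhood `U` of `x` in the unit space.
-/

theorem proper_etale_groupoid_restriction_in_open
    {A : Type*} [TopologicalSpace A] (P : EtaleGroupoid A)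
    -- the unit space is locally compact Hausdorff
    [T2Space ↥P.unitSet] [LocallyCompactSpace ↥P.unitSet]
    -- properness: (r, s) : P → P⁰ × P⁰ is a proper map
    (hproper : IsProperMap (fun p : A =>
      ((⟨P.r p, P.r_mem_unitSet p⟩ : ↥P.unitSet), (⟨P.s p, P.s_mem_unitSet p⟩ : ↥P.unitSet))))
    (x : A) (hx : x ∈ P.unitSet)
    (O : Set A) (hO : IsOpen O)
    (hiso : {p : A | P.r p = x ∧ P.s p = x} ⊆ O) :
    ∃ U : Set A, IsOpen U ∧ x ∈ U ∧
      {p : A | P.r p ∈ U ∧ P.s p ∈ U} ⊆ O := by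
  set f : A → ↥P.unitSet × ↥P.unitSet := fun p =>
    ((⟨P.r p, P.r_mem_unitSet p⟩ : ↥P.unitSet), (⟨P.s p, P.s_mem_unitSet p⟩ : ↥P.unitSet))
  have hclosed : IsClosedMap f := hproper.isClosedMap
  set V : Set (↥P.unitSet × ↥P.unitSet) := (f '' Oᶜ)ᶜ with hV
  have hVopen : IsOpen V := (hclosed _ hO.isClosed_compl).isOpen_compl
  have hxV : ((⟨x, hx⟩ : ↥P.unitSet), (⟨x, hx⟩ : ↥P.unitSet)) ∈ V := by
    intro h
    obtain ⟨p, hpO, hpf⟩ := h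
    have h1 : P.r p = x := congrArg Subtype.val (congrArg Prod.fst hpf)
    have h2 : P.s p = x := congrArg Subtype.val (congrArg Prod.snd hpf)
    exact hpO (hiso ⟨h1, h2⟩)
  have hVsub : ∀ p : A, f p ∈ V → p ∈ O := by
    intro p hp
    by_contra hpO
    exact hp ⟨p, hpO, rfl⟩
  obtain ⟨W1, W2, hW1, hW2, hx1, hx2, hWV⟩ :=
    isOpen_prod_iff.mp hVopen _ _ hxV
  obtain ⟨T1, hT1, hT1eq⟩ := isOpen_induced_iff.mp hW1
  obtain ⟨T2, hT2, hT2eq⟩ := isOpen_induced_iff.mp hW2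
  refine ⟨T1 ∩ T2, hT1.inter hT2, ?_, ?_⟩
  · constructor
    · have := hx1; rw [← hT1eq] at this; exact this
    · have := hx2; rw [← hT2eq] at this; exact this
  · rintro p ⟨hr, hs⟩
    apply hVsub
    apply hWV
    constructor
    · show (⟨P.r p, _⟩ : ↥P.unitSet) ∈ W1
      rw [← hT1eq]; exact hr.1
    · show (⟨P.s p, _⟩ : ↥P.unitSet) ∈ W2
      rw [← hT2eq]; exact hs.2
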